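/- For any admissible configuration X and any word α = (α_1,…,α_n) of positive integers, ε_X(α) = d_X(α) − d_X(πα) − d_X(ϖα) + d_X(πϖα), where πα (resp. ϖα) removes the last (resp. first) letter of α. -/

import Mathlib

open scoped Classical

/-- A configuration of the infinite-bin model: number of balls in each bin. -/
abbrev Config := ℤ → ℕ∞

/-- Admissible configuration: nonempty bins form a semi-infinite interval, and
every bin to the left of an infinite bin is infinite. -/
def IsAdmissible (X : Config) : Prop :=
  (∃ m : ℤ, ∀ j : ℤ, X j ≠ 0 ↔ j ≤ m) ∧ ∀ j : ℤ, X j = ⊤ → X (j - 1) = ⊤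

/-- N(X,k): number of balls in bins of index ≥ k. -/
noncomputable def Nballs (X : Config) (k : ℤ) : ℕ∞ := ∑' j : {j : ℤ // k ≤ j}, X j

/-- B(X,ξ): leftmost position such that there are fewer than ξ balls to its right. -/
noncomputable def Bpos (X : Config) (ξ : ℕ) : ℤ := sInf {j : ℤ | Nballs X j < (ξ : ℕ∞)}

/-- The move of type ξ: add one ball in the bin of index B(X,ξ). -/
noncomputable def Phi (ξ : ℕ) (X : Config) : Config :=
  fun j => X j + (if j = Bpos X ξ then 1 else 0)

/-- The move of type ξ ∈ ℕ ∪ {∞}, with Φ_∞ = id. -/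
noncomputable def PhiE (ξ : ℕ∞) (X : Config) : Config :=
  if ξ = ⊤ then X else Phi ξ.toNat X

/-- The shift operator τ. -/
def shift (X : Config) : Config := fun j => X (j - 1)

/-- Configuration obtained after applying successively the moves listed in α. -/
noncomputable def applyWord (X : Config) (α : List ℕ) : Config :=
  α.foldl (fun Y a => Phi a Y) X

/-- d_X(α): displacement of the front after performing the word α. -/
noncomputable def dX (X : Config) (α : List ℕ) : ℤ :=
  Bpos (applyWord X α) 1 - Bpos X 1

/-- α ∈ P_X : α is nonempty and its last move places a ball in a previously empty bin. -/
def inP (X : Config) (α : List ℕ) : Prop :=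
  ∃ β a, α = β ++ [a] ∧ applyWord X β (Bpos (applyWord X β) a) = 0

/-- ε_X(α) = 1_{α ∈ P_X} - 1_{ϖα ∈ P_X}. -/
noncomputable def eps (X : Config) (α : List ℕ) : ℤ :=
  (if inP X α then 1 else 0) - (if inP X α.tail then 1 else 0)

theorem my_summable {ι : Type*} (f : ι → ℕ∞) : Summable f :=
  ⟨_, tendsto_atTop_iSup fun _ _ => Finset.sum_le_sum_of_subset⟩

def Front (Y : Config) (m : ℤ) : Prop := ∀ j : ℤ, Y j ≠ 0 ↔ j ≤ m

theorem nballs_zero {Y : Config} {m : ℤ} (hm : Front Y m) {j : ℤ} (hj : m < j) :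
    Nballs Y j = 0 := by
  have h0 : ∀ i : {i : ℤ // j ≤ i}, Y i = 0 := by
    intro i
    by_contra h
    have h2 := (hm i).1 h
    have h3 := i.2
    omega
  unfold Nballs
  rw [tsum_congr h0, tsum_zero]

theorem nballs_ge {Y : Config} {m : ℤ} (hm : Front Y m) {j : ℤ} {n : ℕ}
    (hjn : j + n ≤ m + 1) : (n : ℕ∞) ≤ Nballs Y j := by
  classical
  set e : ℕ ↪ {i : ℤ // j ≤ i} :=
    ⟨fun i => ⟨j + i, by omega⟩, by
      intro a b hab
      simpa [Subtype.mk.injEq] using hab⟩ with he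
  have hcard : ((Finset.range n).map e).card = n := by simp
  have hle : ∀ x ∈ (Finset.range n).map e, (1 : ℕ∞) ≤ Y x := by
    intro x hx
    rw [Finset.mem_map] at hx
    obtain ⟨i, hi, rfl⟩ := hx
    rw [Finset.mem_range] at hi
    have : Y (j + (i : ℤ)) ≠ 0 := (hm _).2 (by omega)
    exact ENat.one_le_iff_ne_zero.mpr this
  calc (n : ℕ∞) = ((Finset.range n).map e).card • (1 : ℕ∞) := by simp [hcard]
    _ ≤ ∑ x ∈ (Finset.range n).map e, Y x := Finset.card_nsmul_le_sum _ _ _ hle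
    _ ≤ Nballs Y j := Summable.sum_le_tsum _ (fun _ _ => zero_le) (my_summable _)

theorem bpos_one {Y : Config} {m : ℤ} (hm : Front Y m) : Bpos Y 1 = m + 1 := by
  have hset : {j : ℤ | Nballs Y j < (1 : ℕ∞)} = Set.Ici (m + 1) := by
    ext j
    simp only [Set.mem_setOf_eq, Set.mem_Ici]
    constructor
    · intro h
      by_contra hc
      have : (1 : ℕ∞) ≤ Nballs Y j := by
        have := nballs_ge hm (j := j) (n := 1) (by push_cast; omega)
        simpa using this
      exact absurd h (not_lt.mpr this)
    · intro h
      have := nballs_zero hm (j := j) (by omega)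
      rw [this]
      simp
  rw [Bpos, Nat.cast_one, hset, csInf_Ici]

theorem bpos_le {Y : Config} {m : ℤ} (hm : Front Y m) {a : ℕ} (ha : 1 ≤ a) :
    Bpos Y a ≤ m + 1 := by
  apply csInf_le
  · refine ⟨m + 2 - a, ?_⟩
    intro j hj
    simp only [Set.mem_setOf_eq] at hj
    by_contra hc
    have : (a : ℕ∞) ≤ Nballs Y j := nballs_ge hm (by omega)
    exact absurd hj (not_lt.mpr this)
  · simp only [Set.mem_setOf_eq]
    rw [nballs_zero hm (by omega)]
    exact_mod_cast Nat.pos_of_ne_zero (by omega)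

theorem key {Y : Config} {m : ℤ} (hm : Front Y m) {a : ℕ} (ha : 1 ≤ a) :
    (∃ m', Front (Phi a Y) m') ∧
      Bpos (Phi a Y) 1 = Bpos Y 1 + (if Y (Bpos Y a) = 0 then 1 else 0) := by
  set b := Bpos Y a with hb
  have hble : b ≤ m + 1 := bpos_le hm ha
  by_cases h : Y b = 0
  · have hbm : b = m + 1 := by
      have : ¬ b ≤ m := fun hc => (hm b).2 hc h
      omega
    have hfront : Front (Phi a Y) (m + 1) := by
      intro j
      by_cases hj : j = b
      · subst hj
        simp only [Phi, ← hb, if_pos rfl]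
        rw [hbm]
        constructor
        · intro _; omega
        · intro _; simp
      · simp only [Phi, ← hb, if_neg hj, add_zero]
        rw [hm j]
        omega
    refine ⟨⟨m + 1, hfront⟩, ?_⟩
    rw [bpos_one hfront, bpos_one hm, if_pos h]
  · have hbm : b ≤ m := (hm b).1 h
    have hfront : Front (Phi a Y) m := by
      intro j
      by_cases hj : j = b
      · subst hj
        simp only [Phi, ← hb, if_pos rfl]
        constructor
        · intro _; exact hbm
        · intro _; simp
      · simp only [Phi, ← hb, if_neg hj, add_zero]
        exact hm j
    refine ⟨⟨m, hfront⟩, ?_⟩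
    rw [bpos_one hfront, bpos_one hm, if_neg h]
    ring

theorem applyWord_concat (X : Config) (β : List ℕ) (a : ℕ) :
    applyWord X (β ++ [a]) = Phi a (applyWord X β) := by
  simp [applyWord, List.foldl_append]

theorem applyWord_front {X : Config} {m : ℤ} (hm : Front X m) (β : List ℕ)
    (hβ : ∀ a ∈ β, 1 ≤ a) : ∃ m', Front (applyWord X β) m' := by
  induction β using List.reverseRecOn with
  | nil => exact ⟨m, hm⟩
  | append_singleton γ a ih =>
    obtain ⟨m', hm'⟩ := ih (fun b hb => hβ b (by simp [hb]))
    rw [applyWord_concat]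
    exact (key hm' (hβ a (by simp))).1

theorem inP_concat (X : Config) (β : List ℕ) (a : ℕ) :
    inP X (β ++ [a]) ↔ applyWord X β (Bpos (applyWord X β) a) = 0 := by
  constructor
  · rintro ⟨β', a', heq, h⟩
    obtain ⟨rfl, ha⟩ := List.append_inj' heq (by simp)
    obtain rfl : a' = a := by simpa using ha.symm
    exact h
  · intro h
    exact ⟨β, a, rfl, h⟩

theorem inP_nil (X : Config) : ¬ inP X [] := by
  rintro ⟨β, a, heq, -⟩
  simp at heq

theorem dX_step {X : Config} {m : ℤ} (hm : Front X m) (β : List ℕ)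
    (hβ : ∀ a ∈ β, 1 ≤ a) :
    dX X β - dX X β.dropLast = if inP X β then 1 else 0 := by
  rcases List.eq_nil_or_concat β with rfl | ⟨γ, a, rfl⟩
  · simp [dX, applyWord, inP_nil]
  · obtain ⟨m', hm'⟩ := applyWord_front hm γ (fun b hb => hβ b (by simp [hb]))
    have hk := (key hm' (hβ a (by simp))).2
    rw [List.concat_eq_append, List.dropLast_concat]
    rw [dX, dX, applyWord_concat, hk, inP_concat]
    split <;> ring

theorem eps_eq_dX' (X : Config) (hX : ∃ m : ℤ, ∀ j : ℤ, X j ≠ 0 ↔ j ≤ m) (α : List ℕ)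
    (hα : ∀ a ∈ α, 1 ≤ a) :
    ((if inP X α then 1 else 0) - (if inP X α.tail then 1 else 0) : ℤ)
      = dX X α - dX X α.dropLast - dX X α.tail + dX X α.tail.dropLast := by
  obtain ⟨m, hm⟩ := hX
  have h1 := dX_step hm α hα
  have h2 := dX_step hm α.tail (fun b hb => hα b (List.mem_of_mem_tail hb))
  omega

/-- ε_X(α) = d_X(α) − d_X(πα) − d_X(ϖα) + d_X(πϖα). -/
theorem eps_eq_dX (X : Config) (hX : IsAdmissible X) (α : List ℕ)
    (hα : ∀ a ∈ α, 1 ≤ a) :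
    eps X α = dX X α - dX X α.dropLast - dX X α.tail + dX X α.tail.dropLast := by
  unfold eps
  exact eps_eq_dX' X hX.1 α hα
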